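/- Matrix Bernstein consequence for subsampled covariance: if (1-ε)ΦΦᵀ - εγΠ ⪯ (n/m) Φ_mΦ_mᵀ with Π the orthogonal projection onto Range(Φ) and Range(Φ_m) ⊆ Range(Φ), then Π ⪯ Π_m + (γ/(1-ε)) (ΦΦᵀ + γΠ)⁻¹, where Π_m = Φ_mΦ_mᵀ(Φ_mΦ_mᵀ)⁺ and the inverse is taken on Range(Π). -/

import Mathlib

open Matrix
set_option maxHeartbeats 1000000

private lemma quadsym {d : ℕ} (S : Matrix (Fin d) (Fin d) ℝ) (hS : Sᵀ = S)
    (u v : Fin d → ℝ) : u ⬝ᵥ S *ᵥ v = v ⬝ᵥ S *ᵥ u := by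
  rw [dotProduct_mulVec, ← mulVec_transpose, hS, dotProduct_comm]

private lemma dp_shift {d : ℕ} (M : Matrix (Fin d) (Fin d) ℝ) (hM : Mᵀ = M)
    (u w : Fin d → ℝ) : (M *ᵥ u) ⬝ᵥ w = u ⬝ᵥ M *ᵥ w := by
  rw [dotProduct_comm, dotProduct_mulVec, ← mulVec_transpose, hM, dotProduct_comm]

private lemma dp_self_nonneg {d : ℕ} (y : Fin d → ℝ) : 0 ≤ y ⬝ᵥ y :=
  Finset.sum_nonneg fun i _ => mul_self_nonneg _

/-- Abstract deterministic core over `d × d` matrices. -/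
private lemma auxcore {d : ℕ} (A B Pm Proj ProjM J : Matrix (Fin d) (Fin d) ℝ)
    (γ ε ν : ℝ) (hγ : 0 < γ) (hε0 : 0 < ε) (hε1 : ε < 1)
    (hApsd : A.PosSemidef) (hAsymm : Aᵀ = A)
    (hBsymm : Bᵀ = B)
    (hPs : Projᵀ = Proj) (hPi : Proj * Proj = Proj)
    (hProjA : Proj * A = A)
    (hProjB : Proj * B = B)
    (hPm1 : B * Pm * B = B)
    (hPm3 : (B * Pm)ᵀ = B * Pm)
    (hProjM : ProjM = B * Pm)
    (hJ1 : (A + γ • Proj) * J = Proj) (hJ2 : J * (A + γ • Proj) = Proj)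
    (hJ3 : Proj * J * Proj = J)
    (hconc : (ν • B - ((1 - ε) • A - (ε * γ) • Proj)).PosSemidef) :
    (ProjM + (γ / (1 - ε)) • J - Proj).PosSemidef := by
  have hPmSymm : ProjMᵀ = ProjM := by rw [hProjM]; exact hPm3
  have hBProj : B * Proj = B := by
    have := congrArg transpose hProjB
    rwa [transpose_mul, hBsymm, hPs] at this
  have hProjPm : Proj * ProjM = ProjM := by rw [hProjM, ← mul_assoc, hProjB]
  have hPmProj : ProjM * Proj = ProjM := by
    have := congrArg transpose hProjPm
    rwa [transpose_mul, hPmSymm, hPs] at this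
  have hPmIdem : ProjM * ProjM = ProjM := by rw [hProjM, ← mul_assoc, hPm1]
  have hPmB : ProjM * B = B := by rw [hProjM]; exact hPm1
  have hBPm : B * ProjM = B := by
    have := congrArg transpose hPmB
    rwa [transpose_mul, hBsymm, hPmSymm] at this
  -- the gap projection Q
  set Q := Proj - ProjM with hQ
  have hQsymm : Qᵀ = Q := by rw [hQ, transpose_sub, hPs, hPmSymm]
  have hBQ : B * Q = 0 := by rw [hQ, mul_sub, hBProj, hBPm, sub_self]
  have hProjQ : Proj * Q = Q := by rw [hQ, mul_sub, hPi, hProjPm]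
  have hQProj : Q * Proj = Q := by rw [hQ, sub_mul, hPi, hPmProj]
  have hQidem : Q * Q = Q := by
    rw [hQ, sub_mul, mul_sub, mul_sub, hPi, hProjPm, hPmProj, hPmIdem]
    simp
  -- facts about J
  have hProjJ : Proj * J = J := by
    conv_lhs => rw [← hJ3]
    rw [← mul_assoc, ← mul_assoc, hPi, hJ3]
  have hJProj : J * Proj = J := by
    conv_lhs => rw [← hJ3]
    rw [mul_assoc, hPi, hJ3]
  have hSsymm : (A + γ • Proj)ᵀ = A + γ • Proj := by
    rw [transpose_add, transpose_smul, hAsymm, hPs]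
  have hJtS : Jᵀ * (A + γ • Proj) = Proj := by
    have := congrArg transpose hJ1
    rwa [transpose_mul, hSsymm, hPs] at this
  have hJtProj : Jᵀ * Proj = Jᵀ := by
    have := congrArg transpose hProjJ
    rwa [transpose_mul, hPs] at this
  have hJsymm : Jᵀ = J :=
    calc Jᵀ = Jᵀ * Proj := hJtProj.symm
      _ = Jᵀ * ((A + γ • Proj) * J) := by rw [hJ1]
      _ = Jᵀ * (A + γ • Proj) * J := by rw [mul_assoc]
      _ = Proj * J := by rw [hJtS]
      _ = J := hProjJ
  have hJSJ : J * (A + γ • Proj) * J = J := by rw [hJ2, hProjJ]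
  -- positive semidefiniteness of Proj, S, J
  have hProjPsd : Proj.PosSemidef := by
    have h := posSemidef_self_mul_conjTranspose Proj
    rwa [conjTranspose_eq_transpose_of_trivial, hPs, hPi] at h
  have hSpsd : (A + γ • Proj).PosSemidef := by
    refine Matrix.PosSemidef.of_dotProduct_mulVec_nonneg ?_ (fun x => ?_)
    · show _ᴴ = _
      rw [conjTranspose_eq_transpose_of_trivial, hSsymm]
    · have h1 := hApsd.dotProduct_mulVec_nonneg x
      rw [star_trivial] at h1
      have h2 := hProjPsd.dotProduct_mulVec_nonneg x
      rw [star_trivial] at h2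
      rw [star_trivial, add_mulVec, smul_mulVec, dotProduct_add, dotProduct_smul,
        smul_eq_mul]
      exact add_nonneg h1 (mul_nonneg hγ.le h2)
  have hJpsd : J.PosSemidef := by
    have h := hSpsd.mul_mul_conjTranspose_same J
    rwa [conjTranspose_eq_transpose_of_trivial, hJsymm, hJSJ] at h
  -- the conclusion
  refine Matrix.PosSemidef.of_dotProduct_mulVec_nonneg ?_ (fun x => ?_)
  · show _ᴴ = _
    rw [conjTranspose_eq_transpose_of_trivial, transpose_sub, transpose_add, transpose_smul,
      hPs, hPmSymm, hJsymm]
  · set y := Q *ᵥ x with hy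
    have ht_eq : x ⬝ᵥ Q *ᵥ x = y ⬝ᵥ y := by
      calc x ⬝ᵥ Q *ᵥ x = x ⬝ᵥ (Q * Q) *ᵥ x := by rw [hQidem]
        _ = x ⬝ᵥ Q *ᵥ (Q *ᵥ x) := by rw [mulVec_mulVec]
        _ = (Q *ᵥ x) ⬝ᵥ Q *ᵥ x := quadsym Q hQsymm x (Q *ᵥ x)
        _ = y ⬝ᵥ y := by rw [← hy]
    set t := y ⬝ᵥ y with ht
    have ht0 : 0 ≤ t := dp_self_nonneg y
    have hBy : B *ᵥ y = 0 := by rw [hy, mulVec_mulVec, hBQ, zero_mulVec]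
    have hPy : Proj *ᵥ y = y := by rw [hy, mulVec_mulVec, hProjQ]
    have hyPy : y ⬝ᵥ Proj *ᵥ y = t := by rw [hPy, ht]
    set a := y ⬝ᵥ A *ᵥ y with ha
    have ha0 : 0 ≤ a := by have := hApsd.dotProduct_mulVec_nonneg y; rwa [star_trivial] at this
    have hmain : (1 - ε) * a ≤ ε * γ * t := by
      have h := hconc.dotProduct_mulVec_nonneg y
      rw [star_trivial] at h
      simp only [sub_mulVec, smul_mulVec, dotProduct_sub, dotProduct_smul,
        smul_eq_mul] at h
      rw [hBy, hyPy, ← ha] at h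
      simp only [dotProduct_zero, mul_zero] at h
      linarith
    -- Cauchy–Schwarz for the form S = A + γ•Proj
    set S := A + γ • Proj with hS
    set z := J *ᵥ x with hz
    have hSz : S *ᵥ z = Proj *ᵥ x := by rw [hz, mulVec_mulVec, hS, hJ1]
    have hcross : y ⬝ᵥ S *ᵥ z = t := by
      rw [hSz, hy]
      calc (Q *ᵥ x) ⬝ᵥ Proj *ᵥ x = x ⬝ᵥ Q *ᵥ (Proj *ᵥ x) := dp_shift Q hQsymm x (Proj *ᵥ x)
        _ = x ⬝ᵥ (Q * Proj) *ᵥ x := by rw [mulVec_mulVec]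
        _ = x ⬝ᵥ Q *ᵥ x := by rw [hQProj]
        _ = t := ht_eq
    set jx := x ⬝ᵥ J *ᵥ x with hjx
    have hjx0 : 0 ≤ jx := by have := hJpsd.dotProduct_mulVec_nonneg x; rwa [star_trivial] at this
    have hzSz : z ⬝ᵥ S *ᵥ z = jx := by
      calc z ⬝ᵥ S *ᵥ z = z ⬝ᵥ Proj *ᵥ x := by rw [hSz]
        _ = x ⬝ᵥ Proj *ᵥ z := quadsym Proj hPs z x
        _ = x ⬝ᵥ (Proj * J) *ᵥ x := by rw [hz, mulVec_mulVec]
        _ = jx := by rw [hProjJ, hjx]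
    set s := y ⬝ᵥ S *ᵥ y with hs
    have hs_eq : s = a + γ * t := by
      rw [hs, hS, add_mulVec, smul_mulVec, dotProduct_add, dotProduct_smul,
        smul_eq_mul, ← ha, hyPy]
    have hs0 : 0 ≤ s := by have := hSpsd.dotProduct_mulVec_nonneg y; rwa [star_trivial, ← hs] at this
    have hCS : t * t ≤ jx * s := by
      have hq : ∀ r : ℝ, 0 ≤ jx * (r * r) + (2 * t) * r + s := by
        intro r
        have h := hSpsd.dotProduct_mulVec_nonneg (y + r • z)
        rw [star_trivial] at h
        simp only [mulVec_add, mulVec_smul, dotProduct_add, add_dotProduct,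
          smul_dotProduct, dotProduct_smul, smul_eq_mul] at h
        have hsym : z ⬝ᵥ S *ᵥ y = y ⬝ᵥ S *ᵥ z := quadsym S (by rw [hS, hSsymm]) z y
        rw [hsym, hcross, ← hs, hzSz] at h
        nlinarith [h]
      have hd := discrim_le_zero hq
      rw [discrim] at hd
      nlinarith [hd]
    have h1ε : 0 < 1 - ε := by linarith
    have hfinal : (1 - ε) * t ≤ γ * jx := by
      have key : (1 - ε) * (t * t) ≤ γ * t * jx := by
        have h2 : (1 - ε) * (t * t) ≤ (1 - ε) * (jx * s) :=
          mul_le_mul_of_nonneg_left hCS h1ε.le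
        have h3 : (1 - ε) * (jx * s) = jx * ((1 - ε) * a) + γ * (1 - ε) * t * jx := by
          rw [hs_eq]; ring
        have h4 : jx * ((1 - ε) * a) ≤ jx * (ε * γ * t) :=
          mul_le_mul_of_nonneg_left hmain hjx0
        nlinarith [h2, h3, h4]
      rcases eq_or_lt_of_le ht0 with h | h
      · rw [← h, mul_zero]; exact mul_nonneg hγ.le hjx0
      · have h5 : (1 - ε) * t * t ≤ γ * jx * t := by nlinarith [key]
        have := le_of_mul_le_mul_right h5 h
        linarith
    rw [star_trivial]
    have hexp : x ⬝ᵥ (ProjM + (γ / (1 - ε)) • J - Proj) *ᵥ x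
        = (γ / (1 - ε)) * jx - (x ⬝ᵥ Proj *ᵥ x - x ⬝ᵥ ProjM *ᵥ x) := by
      rw [sub_mulVec, add_mulVec, smul_mulVec, dotProduct_sub, dotProduct_add,
        dotProduct_smul, smul_eq_mul, hjx]
      ring
    have hQx : x ⬝ᵥ Proj *ᵥ x - x ⬝ᵥ ProjM *ᵥ x = t := by
      rw [← ht_eq, hQ, sub_mulVec, dotProduct_sub]
    rw [hexp, hQx, sub_nonneg, div_mul_eq_mul_div, le_div_iff₀ h1ε]
    linarith [hfinal]

/-- Deterministic core of Lemma 1: if `(1-ε)ΦΦᵀ - εγProj ⪯ (n/m) Φ_mΦ_mᵀ`, where the columns of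
`Φ_m` are a subset of the columns of `Φ` and `Proj` is the orthogonal projection onto the range
of `Φ`, then `Proj ⪯ Proj_m + (γ/(1-ε)) (ΦΦᵀ + γProj)⁻¹`, with `Proj_m = Φ_mΦ_mᵀ(Φ_mΦ_mᵀ)⁺` and the
inverse `J` taken on the range of `Proj`. -/
theorem stmt17 {d n m : ℕ} (hm : 0 < m)
    (Φ : Matrix (Fin d) (Fin n) ℝ) (Φm : Matrix (Fin d) (Fin m) ℝ)
    (hcols : ∀ j : Fin m, ∃ i : Fin n, ∀ r, Φm r j = Φ r i)
    (γ ε : ℝ) (hγ : 0 < γ) (hε : ε ∈ Set.Ioo (0 : ℝ) 1)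
    (P : Matrix (Fin d) (Fin d) ℝ)
    (hP1 : Φ * Φᵀ * P * (Φ * Φᵀ) = Φ * Φᵀ)
    (hP2 : P * (Φ * Φᵀ) * P = P)
    (hP3 : (Φ * Φᵀ * P)ᵀ = Φ * Φᵀ * P)
    (hP4 : (P * (Φ * Φᵀ))ᵀ = P * (Φ * Φᵀ))
    (Proj : Matrix (Fin d) (Fin d) ℝ) (hProj : Proj = Φ * Φᵀ * P)
    (Pm : Matrix (Fin d) (Fin d) ℝ)
    (hPm1 : Φm * Φmᵀ * Pm * (Φm * Φmᵀ) = Φm * Φmᵀ)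
    (hPm2 : Pm * (Φm * Φmᵀ) * Pm = Pm)
    (hPm3 : (Φm * Φmᵀ * Pm)ᵀ = Φm * Φmᵀ * Pm)
    (hPm4 : (Pm * (Φm * Φmᵀ))ᵀ = Pm * (Φm * Φmᵀ))
    (ProjM : Matrix (Fin d) (Fin d) ℝ) (hProjM : ProjM = Φm * Φmᵀ * Pm)
    (J : Matrix (Fin d) (Fin d) ℝ)
    (hJ1 : (Φ * Φᵀ + γ • Proj) * J = Proj) (hJ2 : J * (Φ * Φᵀ + γ • Proj) = Proj)
    (hJ3 : Proj * J * Proj = J)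
    (hconc : (((n : ℝ) / (m : ℝ)) • (Φm * Φmᵀ)
      - ((1 - ε) • (Φ * Φᵀ) - (ε * γ) • Proj)).PosSemidef) :
    (ProjM + (γ / (1 - ε)) • J - Proj).PosSemidef := by
  obtain ⟨hε0, hε1⟩ := hε
  have hAsymm : (Φ * Φᵀ)ᵀ = Φ * Φᵀ := by rw [transpose_mul, transpose_transpose]
  have hBsymm : (Φm * Φmᵀ)ᵀ = Φm * Φmᵀ := by rw [transpose_mul, transpose_transpose]
  have hApsd : (Φ * Φᵀ).PosSemidef := by
    rw [← conjTranspose_eq_transpose_of_trivial]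
    exact posSemidef_self_mul_conjTranspose Φ
  have hPs : Projᵀ = Proj := by rw [hProj]; exact hP3
  have hProjA : Proj * (Φ * Φᵀ) = Φ * Φᵀ := by rw [hProj]; exact hP1
  have hAProj : (Φ * Φᵀ) * Proj = Φ * Φᵀ := by
    have := congrArg transpose hProjA
    rwa [transpose_mul, hAsymm, hPs] at this
  have hPi : Proj * Proj = Proj := by
    rw [hProj]
    calc Φ * Φᵀ * P * (Φ * Φᵀ * P) = Φ * Φᵀ * P * (Φ * Φᵀ) * P := by
          simp only [Matrix.mul_assoc]
      _ = Φ * Φᵀ * P := by rw [hP1]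
  have hProjΦ : Proj * Φ = Φ := by
    have e1 : Proj * Φ * (Φᵀ * Proj) = Φ * Φᵀ := by
      calc Proj * Φ * (Φᵀ * Proj) = Proj * (Φ * Φᵀ) * Proj := by simp only [Matrix.mul_assoc]
        _ = Φ * Φᵀ * Proj := by rw [hProjA]
        _ = Φ * Φᵀ := hAProj
    have e2 : Proj * Φ * Φᵀ = Φ * Φᵀ := by rw [Matrix.mul_assoc, hProjA]
    have e3 : Φ * (Φᵀ * Proj) = Φ * Φᵀ := by rw [← Matrix.mul_assoc]; exact hAProj
    have key : (Proj * Φ - Φ) * (Proj * Φ - Φ)ᵀ = 0 := by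
      rw [transpose_sub, transpose_mul, hPs, Matrix.sub_mul, Matrix.mul_sub, Matrix.mul_sub,
        e1, e2, e3]
      simp
    have key2 : (Proj * Φ - Φ) * (Proj * Φ - Φ)ᴴ = 0 := by
      rw [conjTranspose_eq_transpose_of_trivial]; exact key
    exact sub_eq_zero.mp (Matrix.self_mul_conjTranspose_eq_zero.mp key2)
  have hProjΦm : Proj * Φm = Φm := by
    ext r j
    obtain ⟨i, hi⟩ := hcols j
    have h := congrFun (congrFun hProjΦ r) i
    simp only [mul_apply] at h ⊢
    rw [hi r, ← h]
    exact Finset.sum_congr rfl fun k _ => by rw [hi k]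
  have hProjB : Proj * (Φm * Φmᵀ) = Φm * Φmᵀ := by rw [← Matrix.mul_assoc, hProjΦm]
  exact auxcore (Φ * Φᵀ) (Φm * Φmᵀ) Pm Proj ProjM J γ ε ((n : ℝ) / (m : ℝ))
    hγ hε0 hε1 hApsd hAsymm hBsymm hPs hPi hProjA hProjB hPm1 hPm3 hProjM hJ1 hJ2 hJ3 hconc
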